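/- Splitting lemma for values: a derivation π = Δ ⊢ V : ⊗ᵢ₌₁ⁿ τᵢ exists if and only if Δ = ⊗ᵢ₌₁ⁿ Δᵢ and there exist derivations πᵢ = Δᵢ ⊢ V : τᵢ for each i = 1,…,n; moreover the measures satisfy |π| = Σᵢ |πᵢ|. -/

import Mathlib

-- Computational and parallel types
mutual
  inductive CTy : Type
    | one : CTy
    | tens : CTy → CTy → CTy
    | arr : CTy → PTy → CTy
  inductive PTy : Type
    | ofC : CTy → PTy
    | par : PTy → PTy → PTy
end

-- Type equivalence: AC of ⊗ and ⅋, 1 neutral for ⊗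
mutual
  inductive CEq : CTy → CTy → Prop
    | refl (τ) : CEq τ τ
    | symm : CEq τ ρ → CEq ρ τ
    | trans : CEq τ ρ → CEq ρ σ → CEq τ σ
    | comm (τ ρ) : CEq (.tens τ ρ) (.tens ρ τ)
    | assoc (τ ρ σ) : CEq (.tens (.tens τ ρ) σ) (.tens τ (.tens ρ σ))
    | unit (τ) : CEq (.tens τ .one) τ
    | tensCongr : CEq τ τ' → CEq ρ ρ' → CEq (.tens τ ρ) (.tens τ' ρ')
    | arrCongr : CEq τ τ' → PEq α α' → CEq (.arr τ α) (.arr τ' α')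
  inductive PEq : PTy → PTy → Prop
    | refl (α) : PEq α α
    | symm : PEq α β → PEq β α
    | trans : PEq α β → PEq β γ → PEq α γ
    | comm (α β) : PEq (.par α β) (.par β α)
    | assoc (α β γ) : PEq (.par (.par α β) γ) (.par α (.par β γ))
    | parCongr : PEq α α' → PEq β β' → PEq (.par α β) (.par α' β')
    | ofC : CEq τ τ' → PEq (.ofC τ) (.ofC τ')
end

def Ctx : Type := ℕ → CTy
def Ctx.empty : Ctx := fun _ => CTy.one
def Ctx.tens (Γ Δ : Ctx) : Ctx := fun n => CTy.tens (Γ n) (Δ n)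
def Ctx.single (x : ℕ) (τ : CTy) : Ctx := fun n => if n = x then τ else CTy.one
def Ctx.cons (τ : CTy) (Γ : Ctx) : Ctx := fun n =>
  match n with
  | 0 => τ
  | n+1 => Γ n
def CtxEq (Γ Δ : Ctx) : Prop := ∀ n, CEq (Γ n) (Δ n)

def tensList (l : List CTy) : CTy := l.foldr CTy.tens CTy.one
def tensFin (n : ℕ) (f : Fin n → CTy) : CTy := tensList (List.ofFn f)
def tensCtxFin (n : ℕ) (Δ : Fin n → Ctx) : Ctx := fun x => tensFin n (fun i => Δ i x)

def parList : List PTy → PTy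
  | [] => PTy.ofC CTy.one
  | [α] => α
  | α :: β :: rest => PTy.par α (parList (β :: rest))

def parFin (n : ℕ) (f : Fin n → PTy) : PTy := parList (List.ofFn f)

/-- ⅋ᵏ1 : the par of k copies of 1 (left associated); junk value at 0. -/
def parOnes : ℕ → PTy
  | 0 => PTy.ofC CTy.one
  | 1 => PTy.ofC CTy.one
  | n+2 => PTy.par (parOnes (n+1)) (PTy.ofC CTy.one)

/-- Terms of Λ₊∥ in de Bruijn notation. -/
inductive Tm : Type
  | var : ℕ → Tm
  | lam : Tm → Tm
  | app : Tm → Tm → Tm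
  | plus : Tm → Tm → Tm
  | par : Tm → Tm → Tm

def IsValue : Tm → Prop
  | .var _ => True
  | .lam _ => True
  | _ => False

def IsPar : Tm → Prop
  | .par _ _ => True
  | _ => False

def shiftTm (c : ℕ) : Tm → Tm
  | .var n => if n < c then .var n else .var (n+1)
  | .lam M => .lam (shiftTm (c+1) M)
  | .app M N => .app (shiftTm c M) (shiftTm c N)
  | .plus M N => .plus (shiftTm c M) (shiftTm c N)
  | .par M N => .par (shiftTm c M) (shiftTm c N)

/-- Capture-avoiding substitution `M[V/k]` (de Bruijn). -/
def substTm : Tm → ℕ → Tm → Tm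
  | .var n, k, V => if n = k then V else if k < n then .var (n-1) else .var n
  | .lam M, k, V => .lam (substTm M (k+1) (shiftTm 0 V))
  | .app M N, k, V => .app (substTm M k V) (substTm N k V)
  | .plus M N, k, V => .plus (substTm M k V) (substTm N k V)
  | .par M N, k, V => .par (substTm M k V) (substTm N k V)

def closedUnder : ℕ → Tm → Prop
  | d, .var n => n < d
  | d, .lam M => closedUnder (d+1) M
  | d, .app M N => closedUnder d M ∧ closedUnder d N
  | d, .plus M N => closedUnder d M ∧ closedUnder d N
  | d, .par M N => closedUnder d M ∧ closedUnder d N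

def Closed (M : Tm) : Prop := closedUnder 0 M

/-- One-step reduction; the boolean flag records whether a +-reduction is used. -/
inductive Step : Bool → Tm → Tm → Prop
  | beta {M V} : IsValue V → Step false (.app (.lam M) V) (substTm M 0 V)
  | plusL (M N) : Step true (.plus M N) M
  | plusR (M N) : Step true (.plus M N) N
  | parAppL (M N P) : Step false (.app (.par M N) P) (.par (.app M P) (.app N P))
  | parAppR {V} (M N) : IsValue V → Step false (.app V (.par M N)) (.par (.app V M) (.app V N))
  | parL {b M M'} (N) : Step b M M' → Step b (.par M N) (.par M' N)
  | parR {b N N'} (M) : Step b N N' → Step b (.par M N) (.par M N')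
  | appL {b M M'} (N) : Step b M M' → ¬ IsPar M → Step b (.app M N) (.app M' N)
  | appR {b M M' V} : IsValue V → Step b M M' → ¬ IsPar M → Step b (.app V M) (.app V M')

/-- The two contracta of a single +-redex, reduced in context. -/
inductive PlusPair : Tm → Tm → Tm → Prop
  | base (M N) : PlusPair (.plus M N) M N
  | parL {M M₁ M₂} (N) : PlusPair M M₁ M₂ → PlusPair (.par M N) (.par M₁ N) (.par M₂ N)
  | parR {N N₁ N₂} (M) : PlusPair N N₁ N₂ → PlusPair (.par M N) (.par M N₁) (.par M N₂)
  | appL {M M₁ M₂} (N) : PlusPair M M₁ M₂ → ¬ IsPar M → PlusPair (.app M N) (.app M₁ N) (.app M₂ N)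
  | appR {M M₁ M₂ V} : IsValue V → PlusPair M M₁ M₂ → ¬ IsPar M → PlusPair (.app V M) (.app V M₁) (.app V M₂)

/-- n-step reduction. -/
inductive Steps : ℕ → Tm → Tm → Prop
  | refl (M) : Steps 0 M M
  | head {b M N P n} : Step b M N → Steps n N P → Steps (n+1) M P

/-- A closed term converges iff it reduces to a parallel composition of values. -/
def Converges (M : Tm) : Prop :=
  ∃ (n : ℕ) (V : Tm) (Vs : List Tm), IsValue V ∧ (∀ W ∈ Vs, IsValue W) ∧
    Steps n M (Vs.foldl Tm.par V)

/-- Typing derivations, indexed by the measure |π|. -/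
inductive Deriv : Ctx → Tm → PTy → ℕ → Prop
  | ax (x : ℕ) (τ : CTy) : Deriv (Ctx.single x τ) (.var x) (.ofC τ) 0
  | lamI (n : ℕ) (Δ : Fin n → Ctx) (τ : Fin n → CTy) (α : Fin n → PTy) (ms : Fin n → ℕ)
      (M : Tm) :
      (∀ i, Deriv (Ctx.cons (τ i) (Δ i)) M (α i) (ms i)) →
      Deriv (tensCtxFin n Δ) (.lam M)
        (.ofC (tensFin n (fun i => .arr (τ i) (α i)))) (∑ i, ms i)
  | appE (k : ℕ) (hk : 0 < k) (nf : Fin k → ℕ) (hn : ∀ i, 0 < nf i)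
      (τ : ∀ i : Fin k, Fin (nf i) → CTy) (α : ∀ i : Fin k, Fin (nf i) → PTy)
      (Δ : Ctx) (Γ : Fin k → Ctx) (m0 : ℕ) (ms : Fin k → ℕ) (M N : Tm) :
      Deriv Δ M (parFin k (fun i => .ofC (tensFin (nf i) (fun j => .arr (τ i j) (α i j))))) m0 →
      (∀ i, Deriv (Γ i) N (parFin (nf i) (fun j => .ofC (τ i j))) (ms i)) →
      Deriv (Ctx.tens Δ (tensCtxFin k Γ)) (.app M N)
        (parFin k (fun i => parFin (nf i) (α i)))
        ((m0 + (∑ i, ms i) + (∑ i, 2 * nf i)) - 1)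
  | plusL {Δ M α m} (N) : Deriv Δ M α m → Deriv Δ (.plus M N) α (m+1)
  | plusR {Δ N α m} (M) : Deriv Δ N α m → Deriv Δ (.plus M N) α (m+1)
  | parI {Δ Γ M N α β m m'} : Deriv Δ M α m → Deriv Γ N β m' →
      Deriv (Ctx.tens Δ Γ) (.par M N) (.par α β) (m + m')
  | eqv {Γ Γ' M α α' m} : Deriv Γ M α m → CtxEq Γ Γ' → PEq α α' → Deriv Γ' M α' m

def deltaTm : Tm := .lam (.app (.var 0) (.var 0))
def OmegaTm : Tm := .app deltaTm deltaTm
def Idt : Tm := .lam (.var 0)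
def dstarTm : Tm := .lam (.lam (.app (.var 1) (.var 1)))
def YstarTm : Tm := .app dstarTm dstarTm

-- aux part 1: CEq basics, leaves, quotient
namespace Split

abbrev q : CTy → CTy := id

instance ctySetoid : Setoid CTy := ⟨CEq, ⟨CEq.refl, CEq.symm, CEq.trans⟩⟩
def CQ := Quotient ctySetoid
def qq (τ : CTy) : CQ := Quotient.mk ctySetoid τ

def leaves : CTy → List CTy
  | .one => []
  | .tens a b => leaves a ++ leaves b
  | .arr τ α => [.arr τ α]

def leavesQ (σ : CTy) : Multiset CQ := ↑((leaves σ).map qq)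

def pLeavesQ : PTy → Multiset CQ
  | .ofC τ => {qq τ}
  | .par α β => pLeavesQ α + pLeavesQ β

theorem leavesQ_tens (a b : CTy) : leavesQ (.tens a b) = leavesQ a + leavesQ b := by
  simp [leavesQ, leaves]

theorem ceq_invariant {σ ρ : CTy} (h : CEq σ ρ) : leavesQ σ = leavesQ ρ := by
  refine @CEq.rec (fun σ ρ _ => leavesQ σ = leavesQ ρ) (fun α β _ => pLeavesQ α = pLeavesQ β)
    ?_ ?_ ?_ ?_ ?_ ?_ ?_ ?_ ?_ ?_ ?_ ?_ ?_ ?_ ?_ σ ρ h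
  · intro τ; rfl
  · intro _ _ _ ih; exact ih.symm
  · intro _ _ _ _ _ ih1 ih2; exact ih1.trans ih2
  · intro τ ρ; simp [leavesQ_tens, add_comm]
  · intro τ ρ σ; simp [leavesQ_tens, add_assoc]
  · intro τ; simp [leavesQ_tens, leavesQ, leaves]
  · intro _ _ _ _ _ _ ih1 ih2; simp [leavesQ_tens, ih1, ih2]
  · intro a b c d h1 h2 _ _
    have e : qq (.arr a c) = qq (.arr b d) := Quotient.sound (CEq.arrCongr h1 h2)
    simp [leavesQ, leaves, e]
  · intro α; rfl
  · intro _ _ _ ih; exact ih.symm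
  · intro _ _ _ _ _ ih1 ih2; exact ih1.trans ih2
  · intro α β; simp [pLeavesQ, add_comm]
  · intro α β γ; simp [pLeavesQ, add_assoc]
  · intro _ _ _ _ _ _ ih1 ih2; simp [pLeavesQ, ih1, ih2]
  · intro τ τ' h _
    have e : qq τ = qq τ' := Quotient.sound h
    simp [pLeavesQ, e]

end Split
namespace Split

theorem peq_invariant {α β : PTy} (h : PEq α β) : pLeavesQ α = pLeavesQ β := by
  refine @PEq.rec (fun σ ρ _ => leavesQ σ = leavesQ ρ) (fun α β _ => pLeavesQ α = pLeavesQ β)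
    ?_ ?_ ?_ ?_ ?_ ?_ ?_ ?_ ?_ ?_ ?_ ?_ ?_ ?_ ?_ α β h
  · intro τ; rfl
  · intro _ _ _ ih; exact ih.symm
  · intro _ _ _ _ _ ih1 ih2; exact ih1.trans ih2
  · intro τ ρ; simp [leavesQ_tens, add_comm]
  · intro τ ρ σ; simp [leavesQ_tens, add_assoc]
  · intro τ; simp [leavesQ_tens, leavesQ, leaves]
  · intro _ _ _ _ _ _ ih1 ih2; simp [leavesQ_tens, ih1, ih2]
  · intro a b c d h1 h2 _ _
    have e : qq (.arr a c) = qq (.arr b d) := Quotient.sound (CEq.arrCongr h1 h2)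
    simp [leavesQ, leaves, e]
  · intro α; rfl
  · intro _ _ _ ih; exact ih.symm
  · intro _ _ _ _ _ ih1 ih2; exact ih1.trans ih2
  · intro α β; simp [pLeavesQ, add_comm]
  · intro α β γ; simp [pLeavesQ, add_assoc]
  · intro _ _ _ _ _ _ ih1 ih2; simp [pLeavesQ, ih1, ih2]
  · intro τ τ' h _
    have e : qq τ = qq τ' := Quotient.sound h
    simp [pLeavesQ, e]

theorem peq_ofC {τ σ : CTy} (h : PEq (.ofC τ) (.ofC σ)) : CEq τ σ := by
  have := peq_invariant h
  simp only [pLeavesQ, Multiset.singleton_inj] at this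
  exact Quotient.exact this

-- basic CEq facts
theorem ceq_one_tens (τ : CTy) : CEq (.tens .one τ) τ :=
  (CEq.comm _ _).trans (CEq.unit τ)

theorem tensList_append (l₁ l₂ : List CTy) :
    CEq (tensList (l₁ ++ l₂)) (.tens (tensList l₁) (tensList l₂)) := by
  induction l₁ with
  | nil => exact (ceq_one_tens _).symm
  | cons a t ih =>
    show CEq (.tens a (tensList (t ++ l₂))) _
    exact ((CEq.refl a).tensCongr ih).trans (CEq.assoc a (tensList t) (tensList l₂)).symm

theorem ceq_tensList_leaves : ∀ σ : CTy, CEq σ (tensList (leaves σ))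
  | .one => CEq.refl _
  | .tens a b =>
    ((ceq_tensList_leaves a).tensCongr (ceq_tensList_leaves b)).trans
      (tensList_append (leaves a) (leaves b)).symm
  | .arr τ α => (CEq.unit _).symm

theorem tensList_middle (s₁ s₂ : List CTy) (b : CTy) :
    CEq (tensList (s₁ ++ b :: s₂)) (.tens b (tensList (s₁ ++ s₂))) := by
  refine (tensList_append s₁ (b :: s₂)).trans ?_
  show CEq (.tens (tensList s₁) (.tens b (tensList s₂))) _
  refine ((CEq.assoc _ _ _).symm).trans ?_
  refine (CEq.tensCongr (CEq.comm _ _) (CEq.refl _)).trans ?_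
  refine (CEq.assoc _ _ _).trans ?_
  exact CEq.tensCongr (CEq.refl b) (tensList_append s₁ s₂).symm

/-- reconstruction: equal multisets of classes give CEq tensors -/
theorem tensList_congr : ∀ (l l' : List CTy),
    (↑(l.map qq) : Multiset CQ) = ↑(l'.map qq) → CEq (tensList l) (tensList l')
  | [], l', h => by
    have : l'.map qq = [] := by
      have h2 : (↑(l'.map qq) : Multiset CQ) = (0 : Multiset CQ) := by
        rw [← h]; simp
      exact (Multiset.coe_eq_zero _).mp h2
    have : l' = [] := List.map_eq_nil_iff.mp this
    subst this; exact CEq.refl _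
  | a :: t, l', h => by
    have hmem : qq a ∈ (↑(l'.map qq) : Multiset CQ) := by
      rw [← h]; simp
    have hmem' : qq a ∈ l'.map qq := by exact_mod_cast hmem
    obtain ⟨b, hb, hqb⟩ := List.mem_map.mp hmem'
    obtain ⟨s₁, s₂, rfl⟩ := List.append_of_mem hb
    have hba : CEq b a := Quotient.exact hqb
    have h2 : (↑(t.map qq) : Multiset CQ) = ↑((s₁ ++ s₂).map qq) := by
      have hl : ((s₁ ++ b :: s₂).map qq : Multiset CQ) = qq b ::ₘ ↑((s₁ ++ s₂).map qq) := by
        simp [List.map_append]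
      rw [hl, hqb] at h
      have hh : (↑((a :: t).map qq) : Multiset CQ) = qq a ::ₘ ↑(t.map qq) := by simp
      rw [hh] at h
      exact (Multiset.cons_inj_right _).mp h
    have ih := tensList_congr t (s₁ ++ s₂) h2
    show CEq (.tens a (tensList t)) _
    exact (CEq.tensCongr hba.symm ih).trans (tensList_middle s₁ s₂ b).symm

theorem tensList_perm {l l' : List CTy} (h : l.Perm l') : CEq (tensList l) (tensList l') :=
  tensList_congr l l' (by exact_mod_cast Multiset.coe_eq_coe.mpr (h.map qq))

end Split
namespace Split

theorem ctxEq_refl (Γ : Ctx) : CtxEq Γ Γ := fun _ => CEq.refl _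
theorem ctxEq_symm {Γ Δ : Ctx} (h : CtxEq Γ Δ) : CtxEq Δ Γ := fun n => (h n).symm
theorem ctxEq_trans {Γ Δ E : Ctx} (h : CtxEq Γ Δ) (h' : CtxEq Δ E) : CtxEq Γ E :=
  fun n => (h n).trans (h' n)

abbrev Prem := Ctx × CTy × PTy × ℕ
def arrOf (p : Prem) : CTy := .arr p.2.1 p.2.2.1
def measOf (p : Prem) : ℕ := p.2.2.2
def ctxOf (L : List Prem) : Ctx := fun x => tensList (L.map fun p => p.1 x)
def PremOk (M : Tm) (p : Prem) : Prop := Deriv (Ctx.cons p.2.1 p.1) M p.2.2.1 p.2.2.2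
def arrQ (p : Prem) : CQ := qq (arrOf p)

theorem list_partition {α β : Type} (f : α → β) :
    ∀ (L : List α) (s₁ s₂ : Multiset β), (↑(L.map f) : Multiset β) = s₁ + s₂ →
      ∃ L₁ L₂ : List α, L.Perm (L₁ ++ L₂) ∧ (↑(L₁.map f) : Multiset β) = s₁ ∧
        (↑(L₂.map f) : Multiset β) = s₂
  | [], s₁, s₂, h => by
    have h' : (0 : Multiset β) = s₁ + s₂ := by simpa using h
    obtain ⟨h1, h2⟩ := add_eq_zero.mp h'.symm
    exact ⟨[], [], List.Perm.refl _, by simp [h1.symm], by simp [h2.symm]⟩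
  | a :: T, s₁, s₂, h => by
    have hmem : f a ∈ s₁ + s₂ := by
      rw [← h]; simp
    have hT : (↑((a :: T).map f) : Multiset β) = f a ::ₘ ↑(T.map f) := by simp
    rcases Multiset.mem_add.mp hmem with hm | hm
    · obtain ⟨t₁, rfl⟩ := Multiset.exists_cons_of_mem hm
      rw [hT, Multiset.cons_add] at h
      have h' := (Multiset.cons_inj_right _).mp h
      obtain ⟨L₁, L₂, hp, e1, e2⟩ := list_partition f T t₁ s₂ h'
      exact ⟨a :: L₁, L₂, (hp.cons a), by rw [List.map_cons, ← Multiset.cons_coe, e1], e2⟩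
    · obtain ⟨t₂, rfl⟩ := Multiset.exists_cons_of_mem hm
      rw [hT] at h
      have h2 : s₁ + f a ::ₘ t₂ = f a ::ₘ (s₁ + t₂) := by
        rw [Multiset.add_cons]
      rw [h2] at h
      have h' := (Multiset.cons_inj_right _).mp h
      obtain ⟨L₁, L₂, hp, e1, e2⟩ := list_partition f T s₁ t₂ h'
      exact ⟨L₁, a :: L₂, (hp.cons a).trans List.perm_middle.symm, e1,
        by rw [List.map_cons, ← Multiset.cons_coe, e2]⟩
  termination_by L => L.length

theorem deriv_lam_of_list (M : Tm) (L : List Prem)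
    (h : ∀ p ∈ L, PremOk M p) :
    Deriv (ctxOf L) (.lam M) (.ofC (tensList (L.map arrOf))) ((L.map measOf).sum) := by
  have key := Deriv.lamI L.length (fun i => (L.get i).1) (fun i => (L.get i).2.1)
      (fun i => (L.get i).2.2.1) (fun i => (L.get i).2.2.2) M
      (fun i => h _ (L.get_mem i))
  have mg : ∀ {β : Type} (g : Prem → β), L.map g = List.ofFn (fun i => g (L.get i)) := by
    intro β g
    conv_lhs => rw [← List.ofFn_get L]
    rw [List.map_ofFn]; rfl
  have e1 : ctxOf L = tensCtxFin L.length (fun i => (L.get i).1) := by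
    funext x
    show tensList (L.map fun p => p.1 x) = tensList (List.ofFn fun i => (L.get i).1 x)
    rw [mg]
  have e2 : tensList (L.map arrOf) =
      tensFin L.length (fun i => .arr ((L.get i).2.1) ((L.get i).2.2.1)) := by
    show _ = tensList _
    rw [mg arrOf]; rfl
  have e3 : (L.map measOf).sum = ∑ i, (L.get i).2.2.2 := by
    rw [mg measOf, List.sum_ofFn]; rfl
  rw [e1, e2, e3]
  exact key

end Split
namespace Split

theorem canon {Δ : Ctx} {W : Tm} {β : PTy} {m : ℕ} (h : Deriv Δ W β m) :
    (∀ x σ, W = .var x → PEq β (.ofC σ) → m = 0 ∧ CtxEq Δ (Ctx.single x σ)) ∧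
    (∀ M σ, W = .lam M → PEq β (.ofC σ) →
      ∃ L : List Prem, CtxEq Δ (ctxOf L) ∧ CEq (tensList (L.map arrOf)) σ ∧
        (∀ p ∈ L, PremOk M p) ∧ m = (L.map measOf).sum) := by
  induction h with
  | ax x τ =>
    constructor
    · rintro x' σ hW hP
      obtain rfl : x = x' := by injection hW
      refine ⟨rfl, ?_⟩
      have hc : CEq τ σ := peq_ofC hP
      intro n
      unfold Ctx.single
      by_cases hn : n = x <;> simp [hn]
      · exact hc
      · exact CEq.refl _
    · rintro M σ hW; cases hW
  | lamI n Δf τf αf msf M hp ih =>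
    constructor
    · rintro x σ hW; cases hW
    · rintro M' σ hW hP
      obtain rfl : M = M' := by injection hW
      refine ⟨List.ofFn (fun i => (Δf i, τf i, αf i, msf i)), ?_, ?_, ?_, ?_⟩
      · have e : ctxOf (List.ofFn (fun i => ((Δf i, τf i, αf i, msf i) : Prem))) =
            tensCtxFin n Δf := by
          funext x
          show tensList _ = tensList _
          rw [List.map_ofFn]; rfl
        rw [e]; exact ctxEq_refl _
      · have e : (List.ofFn (fun i => ((Δf i, τf i, αf i, msf i) : Prem))).map arrOf =
            List.ofFn (fun i => CTy.arr (τf i) (αf i)) := by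
          rw [List.map_ofFn]; rfl
        rw [e]
        exact peq_ofC hP
      · intro p hpL
        obtain ⟨i, rfl⟩ := List.mem_ofFn.mp hpL
        exact hp i
      · rw [List.map_ofFn]
        show _ = (List.ofFn (fun i => msf i)).sum
        rw [List.sum_ofFn]
  | appE k hk nf hn τf αf Δ Γ m0 msf M N h0 h1 ih0 ih1 =>
    exact ⟨(fun x σ hW _ => by cases hW), (fun M' σ hW _ => by cases hW)⟩
  | plusL N h ih => exact ⟨(fun x σ hW _ => by cases hW), (fun M' σ hW _ => by cases hW)⟩
  | plusR M h ih => exact ⟨(fun x σ hW _ => by cases hW), (fun M' σ hW _ => by cases hW)⟩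
  | parI h1 h2 ih1 ih2 => exact ⟨(fun x σ hW _ => by cases hW), (fun M' σ hW _ => by cases hW)⟩
  | eqv h hc hp ih =>
    constructor
    · intro x σ hW hP
      obtain ⟨hm, hctx⟩ := ih.1 x σ hW (hp.trans hP)
      exact ⟨hm, ctxEq_trans (ctxEq_symm hc) hctx⟩
    · intro M σ hW hP
      obtain ⟨L, hctx, hce, hps, hm⟩ := ih.2 M σ hW (hp.trans hP)
      exact ⟨L, ctxEq_trans (ctxEq_symm hc) hctx, hce, hps, hm⟩

end Split
namespace Split

theorem leavesQ_tensList (L : List Prem) :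
    leavesQ (tensList (L.map arrOf)) = ↑(L.map arrQ) := by
  induction L with
  | nil => rfl
  | cons p T ih =>
    show leavesQ (.tens (arrOf p) (tensList (T.map arrOf))) = _
    rw [leavesQ_tens, ih]
    show leavesQ (.arr _ _) + _ = _
    simp only [leavesQ, leaves, List.map_cons, List.map_nil]
    rw [← Multiset.cons_coe, ← Multiset.singleton_add]
    rfl

theorem ctx_one_eq {Δ : Ctx} (x : ℕ) (h : CtxEq Δ (Ctx.single x CTy.one)) :
    CtxEq Δ (fun _ => CTy.one) := by
  intro n
  have c := h n
  unfold Ctx.single at c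
  show CEq (Δ n) CTy.one
  rw [ite_self] at c
  exact c

/-- Z : a value typed with 1 has measure 0 and all-one context. -/
theorem deriv_one_elim {V : Tm} (hV : IsValue V) {Δ : Ctx} {m : ℕ}
    (h : Deriv Δ V (.ofC .one) m) : m = 0 ∧ CtxEq Δ (fun _ => CTy.one) := by
  cases V with
  | var x =>
    obtain ⟨hm, hctx⟩ := (canon h).1 x .one rfl (PEq.refl _)
    exact ⟨hm, ctx_one_eq x hctx⟩
  | lam M =>
    obtain ⟨L, hctx, hce, _, hm⟩ := (canon h).2 M .one rfl (PEq.refl _)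
    have inv := ceq_invariant hce
    rw [leavesQ_tensList] at inv
    have : L.map arrQ = [] := Multiset.coe_eq_zero _ |>.mp (by simpa [leavesQ, leaves] using inv)
    have hL : L = [] := List.map_eq_nil_iff.mp this
    subst hL
    exact ⟨by simpa using hm, hctx⟩
  | app a b => exact hV.elim
  | plus a b => exact hV.elim
  | par a b => exact hV.elim

/-- Z-intro : any value can be typed with 1 in an all-one context. -/
theorem deriv_one_intro {V : Tm} (hV : IsValue V) {Δ : Ctx}
    (hc : CtxEq (fun _ => CTy.one) Δ) : Deriv Δ V (.ofC .one) 0 := by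
  cases V with
  | var x =>
    refine Deriv.eqv (Deriv.ax x .one) ?_ (PEq.refl _)
    intro n
    unfold Ctx.single
    show CEq (if n = x then CTy.one else CTy.one) (Δ n)
    rw [ite_self]
    exact hc n
  | lam M =>
    have base := Deriv.lamI 0 Fin.elim0 Fin.elim0 Fin.elim0 Fin.elim0 M (fun i => i.elim0)
    have e1 : tensFin 0 (fun i => CTy.arr (Fin.elim0 i) (Fin.elim0 i)) = CTy.one := by
      simp [tensFin, List.ofFn_zero]; rfl
    have e2 : (∑ i : Fin 0, Fin.elim0 i) = 0 := by simp
    rw [e1, e2] at base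
    refine Deriv.eqv base ?_ (PEq.refl _)
    intro n
    exact hc n
  | app a b => exact hV.elim
  | plus a b => exact hV.elim
  | par a b => exact hV.elim

/-- A : merging two value derivations into a tensor. -/
theorem merge {V : Tm} (hV : IsValue V) {Δ₁ Δ₂ : Ctx} {σ ρ : CTy} {m₁ m₂ : ℕ}
    (h₁ : Deriv Δ₁ V (.ofC σ) m₁) (h₂ : Deriv Δ₂ V (.ofC ρ) m₂) :
    Deriv (Ctx.tens Δ₁ Δ₂) V (.ofC (.tens σ ρ)) (m₁ + m₂) := by
  cases V with
  | var x =>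
    obtain ⟨hm₁, hc₁⟩ := (canon h₁).1 x σ rfl (PEq.refl _)
    obtain ⟨hm₂, hc₂⟩ := (canon h₂).1 x ρ rfl (PEq.refl _)
    subst hm₁; subst hm₂
    refine Deriv.eqv (Deriv.ax x (.tens σ ρ)) ?_ (PEq.refl _)
    intro n
    have c₁ := hc₁ n; have c₂ := hc₂ n
    unfold Ctx.single at c₁ c₂ ⊢
    show CEq _ (.tens (Δ₁ n) (Δ₂ n))
    by_cases hn : n = x <;> simp [hn] at c₁ c₂ ⊢
    · exact CEq.tensCongr c₁.symm c₂.symm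
    · exact (CEq.unit .one).symm.trans (CEq.tensCongr c₁.symm c₂.symm)
  | lam M =>
    obtain ⟨L₁, hc₁, he₁, hp₁, hm₁⟩ := (canon h₁).2 M σ rfl (PEq.refl _)
    obtain ⟨L₂, hc₂, he₂, hp₂, hm₂⟩ := (canon h₂).2 M ρ rfl (PEq.refl _)
    have hd := deriv_lam_of_list M (L₁ ++ L₂)
      (fun p hp => (List.mem_append.mp hp).elim (hp₁ p) (hp₂ p))
    have hsum : ((L₁ ++ L₂).map measOf).sum = m₁ + m₂ := by
      rw [List.map_append, List.sum_append, hm₁, hm₂]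
    rw [hsum] at hd
    refine Deriv.eqv hd ?_ (PEq.ofC ?_)
    · intro n
      show CEq (tensList _) (.tens (Δ₁ n) (Δ₂ n))
      rw [List.map_append]
      exact (tensList_append _ _).trans (CEq.tensCongr (hc₁ n).symm (hc₂ n).symm)
    · rw [List.map_append]
      exact (tensList_append _ _).trans (CEq.tensCongr he₁ he₂)
  | app a b => exact hV.elim
  | plus a b => exact hV.elim
  | par a b => exact hV.elim

/-- B : splitting a value derivation of a tensor type. -/
theorem split {V : Tm} (hV : IsValue V) {Δ : Ctx} {σ ρ : CTy} {m : ℕ}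
    (h : Deriv Δ V (.ofC (.tens σ ρ)) m) :
    ∃ (Δ₁ Δ₂ : Ctx) (m₁ m₂ : ℕ), CtxEq Δ (Ctx.tens Δ₁ Δ₂) ∧
      Deriv Δ₁ V (.ofC σ) m₁ ∧ Deriv Δ₂ V (.ofC ρ) m₂ ∧ m = m₁ + m₂ := by
  cases V with
  | var x =>
    obtain ⟨hm, hctx⟩ := (canon h).1 x (.tens σ ρ) rfl (PEq.refl _)
    refine ⟨Ctx.single x σ, Ctx.single x ρ, 0, 0, ?_, Deriv.ax x σ, Deriv.ax x ρ, by omega⟩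
    intro n
    have c := hctx n
    unfold Ctx.single at c ⊢
    show CEq _ (.tens _ _)
    by_cases hn : n = x <;> simp [hn] at c ⊢
    · exact c
    · exact c.trans (CEq.unit .one).symm
  | lam M =>
    obtain ⟨L, hctx, hce, hps, hm⟩ := (canon h).2 M (.tens σ ρ) rfl (PEq.refl _)
    have inv := ceq_invariant hce
    rw [leavesQ_tensList, leavesQ_tens] at inv
    obtain ⟨L₁, L₂, hperm, e₁, e₂⟩ := list_partition arrQ L (leavesQ σ) (leavesQ ρ) inv
    have mkd : ∀ (L' : List Prem) (χ : CTy), (↑(L'.map arrQ) : Multiset CQ) = leavesQ χ →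
        (∀ p ∈ L', PremOk M p) →
        Deriv (ctxOf L') (.lam M) (.ofC χ) ((L'.map measOf).sum) := by
      intro L' χ he hp
      refine Deriv.eqv (deriv_lam_of_list M L' hp) (ctxEq_refl _) (PEq.ofC ?_)
      refine (tensList_congr (L'.map arrOf) (leaves χ) ?_).trans (ceq_tensList_leaves χ).symm
      rw [List.map_map]
      exact he
    have hmem₁ : ∀ p ∈ L₁, PremOk M p := fun p hp =>
      hps p (hperm.mem_iff.mpr (List.mem_append.mpr (Or.inl hp)))
    have hmem₂ : ∀ p ∈ L₂, PremOk M p := fun p hp =>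
      hps p (hperm.mem_iff.mpr (List.mem_append.mpr (Or.inr hp)))
    refine ⟨ctxOf L₁, ctxOf L₂, _, _, ?_, mkd L₁ σ e₁ hmem₁, mkd L₂ ρ e₂ hmem₂, ?_⟩
    · refine ctxEq_trans hctx ?_
      intro n
      show CEq (tensList _) (.tens (tensList _) (tensList _))
      refine (tensList_perm (hperm.map _)).trans ?_
      rw [List.map_append]
      exact tensList_append _ _
    · rw [hm, (hperm.map measOf).sum_eq, List.map_append, List.sum_append]
  | app a b => exact hV.elim
  | plus a b => exact hV.elim
  | par a b => exact hV.elim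

end Split
namespace Split

theorem tensFin_zero (f : Fin 0 → CTy) : tensFin 0 f = .one := by
  rw [tensFin, List.ofFn_zero]; rfl

theorem tensFin_succ {n : ℕ} (f : Fin (n+1) → CTy) :
    tensFin (n+1) f = .tens (f 0) (tensFin n (fun i => f i.succ)) := by
  rw [tensFin, List.ofFn_succ]; rfl

theorem fwd (V : Tm) (hV : IsValue V) : ∀ (n : ℕ) (τ : Fin n → CTy) (Δ : Ctx) (m : ℕ),
    Deriv Δ V (.ofC (tensFin n τ)) m →
    ∃ (Δs : Fin n → Ctx) (ms : Fin n → ℕ),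
      CtxEq Δ (tensCtxFin n Δs) ∧ (∀ i, Deriv (Δs i) V (.ofC (τ i)) (ms i)) ∧
      m = ∑ i, ms i := by
  intro n
  induction n with
  | zero =>
    intro τ Δ m h
    rw [tensFin_zero] at h
    obtain ⟨hm, hctx⟩ := deriv_one_elim hV h
    refine ⟨Fin.elim0, Fin.elim0, ?_, (fun i => i.elim0), by simpa using hm⟩
    intro x
    show CEq (Δ x) (tensFin 0 _)
    rw [tensFin_zero]
    exact hctx x
  | succ n ih =>
    intro τ Δ m h
    rw [tensFin_succ] at h
    obtain ⟨Δ₁, Δ₂, m₁, m₂, hctx, h₁, h₂, hm⟩ := split hV h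
    obtain ⟨Δs', ms', hctx', hd', hm'⟩ := ih (fun i => τ i.succ) Δ₂ m₂ h₂
    refine ⟨Fin.cons Δ₁ Δs', Fin.cons m₁ ms', ?_, ?_, ?_⟩
    · intro x
      show CEq (Δ x) (tensFin (n+1) (fun i => (Fin.cons (α := fun _ => Ctx) Δ₁ Δs' i) x))
      rw [tensFin_succ]
      have e : (fun i : Fin n => (Fin.cons (α := fun _ => Ctx) Δ₁ Δs' i.succ) x)
          = fun i => Δs' i x := by
        funext i; rw [Fin.cons_succ]
      show CEq (Δ x) (.tens ((Fin.cons (α := fun _ => Ctx) Δ₁ Δs' 0) x)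
        (tensFin n fun i => (Fin.cons (α := fun _ => Ctx) Δ₁ Δs' i.succ) x))
      rw [Fin.cons_zero, e]
      exact (hctx x).trans (CEq.tensCongr (CEq.refl _) (hctx' x))
    · intro i
      refine Fin.cases ?_ ?_ i
      · simp only [Fin.cons_zero]; exact h₁
      · intro j; simp only [Fin.cons_succ]; exact hd' j
    · rw [hm, hm', Fin.sum_cons]

theorem bwd (V : Tm) (hV : IsValue V) : ∀ (n : ℕ) (τ : Fin n → CTy) (Δs : Fin n → Ctx)
    (ms : Fin n → ℕ) (Δ : Ctx), CtxEq Δ (tensCtxFin n Δs) →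
    (∀ i, Deriv (Δs i) V (.ofC (τ i)) (ms i)) →
    Deriv Δ V (.ofC (tensFin n τ)) (∑ i, ms i) := by
  intro n
  induction n with
  | zero =>
    intro τ Δs ms Δ hctx _
    rw [tensFin_zero]
    rw [show (∑ i : Fin 0, ms i) = 0 by simp]
    refine deriv_one_intro hV ?_
    intro x
    have c := hctx x
    rw [show tensCtxFin 0 Δs x = CTy.one from by show tensFin 0 _ = _; rw [tensFin_zero]] at c
    exact c.symm
  | succ n ih =>
    intro τ Δs ms Δ hctx hd
    have tail := ih (fun i => τ i.succ) (fun i => Δs i.succ) (fun i => ms i.succ)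
      (tensCtxFin n (fun i => Δs i.succ)) (ctxEq_refl _) (fun i => hd i.succ)
    have comb := merge hV (hd 0) tail
    rw [tensFin_succ, Fin.sum_univ_succ]
    refine Deriv.eqv comb ?_ (PEq.refl _)
    intro x
    have e : tensCtxFin (n+1) Δs x
        = .tens (Δs 0 x) (tensCtxFin n (fun i => Δs i.succ) x) := by
      show tensFin (n+1) _ = _
      rw [tensFin_succ]; rfl
    have c := hctx x
    rw [e] at c
    exact c.symm

end Split

theorem value_tensor_splitting (V : Tm) (hV : IsValue V) (n : ℕ) (τ : Fin n → CTy)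
    (Δ : Ctx) (m : ℕ) :
    Deriv Δ V (.ofC (tensFin n τ)) m ↔
      ∃ (Δs : Fin n → Ctx) (ms : Fin n → ℕ),
        CtxEq Δ (tensCtxFin n Δs) ∧ (∀ i, Deriv (Δs i) V (.ofC (τ i)) (ms i)) ∧
        m = ∑ i, ms i := by
  constructor
  · exact Split.fwd V hV n τ Δ m
  · rintro ⟨Δs, ms, hctx, hd, rfl⟩
    exact Split.bwd V hV n τ Δs ms Δ hctx hd
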